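/- Let α : G ↷ A and β : G ↷ B be actions on C*-algebras, and ψ : A → M(B) a *-homomorphism such that the map I ↦ closure(Bψ(I)B) from I(A) to I(B) is equivariant with respect to α♯ and β♯. Define ψ̂ : A → C_b^s(G, M(B)) = M(C₀(G,B)) by ψ̂(a)(g) = β_g(ψ(α_{g⁻¹}(a))). Then ψ̂ is equivariant with respect to α and the action β̄ on C_b^s(G,M(B)) given by β̄_g(f)(h) = β_g(f(g⁻¹h)), and for every closed ideal I of A the closed ideal of C₀(G,B) generated by ψ̂(I) equals C₀(G, closure(Bψ(I)B)). -/

import Mathlib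

open ZeroAtInfty MultiplierAlgebra

noncomputable instance {X B : Type*} [TopologicalSpace X] [NonUnitalCStarAlgebra B] :
    NonUnitalCStarAlgebra C₀(X, B) where

/-- The closed two-sided ideal generated by a set. -/
def genClosedIdeal {C : Type*} [NonUnitalCStarAlgebra C] (s : Set C) : TwoSidedIdeal C :=
  sInf {J : TwoSidedIdeal C | IsClosed (J : Set C) ∧ s ⊆ J}

section Aux

variable {C : Type*} [NonUnitalCStarAlgebra C]

lemma aux_eq_zero_left {w : C} (h : ∀ z, w * z = 0) : w = 0 := by
  have h2 : ‖w‖ * ‖w‖ = 0 := by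
    rw [← CStarRing.norm_self_mul_star, h (star w), norm_zero]
  simpa using norm_eq_zero.mp (mul_self_eq_zero.mp h2)

lemma aux_eq_zero_right {w : C} (h : ∀ z, z * w = 0) : w = 0 := by
  have h2 : ‖w‖ * ‖w‖ = 0 := by
    rw [← CStarRing.norm_star_mul_self, h (star w), norm_zero]
  simpa using norm_eq_zero.mp (mul_self_eq_zero.mp h2)

lemma DC_fst_mul (m : 𝓜(ℂ, C)) (x y : C) : m.fst (x * y) = m.fst x * y := by
  rw [← sub_eq_zero]
  refine aux_eq_zero_right fun z => ?_
  rw [mul_sub, ← m.central z (x * y), ← mul_assoc, m.central z x, mul_assoc, sub_self]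

lemma DC_snd_mul (m : 𝓜(ℂ, C)) (x y : C) : m.snd (x * y) = x * m.snd y := by
  rw [← sub_eq_zero]
  refine aux_eq_zero_left fun z => ?_
  rw [sub_mul, m.central (x * y) z, mul_assoc, ← m.central y z, ← mul_assoc, sub_self]

lemma DC_mul_coe (m : 𝓜(ℂ, C)) (c : C) :
    m * (c : 𝓜(ℂ, C)) = ((m.fst c : C) : 𝓜(ℂ, C)) := by
  refine DoubleCentralizer.ext _ _ _ _ (Prod.ext ?_ ?_)
  · ext x
    show (m * (c : 𝓜(ℂ, C))).fst x = ((m.fst c : C) : 𝓜(ℂ, C)).fst x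
    rw [DoubleCentralizer.mul_fst, DoubleCentralizer.coe_fst, DoubleCentralizer.coe_fst]
    show m.fst (ContinuousLinearMap.mul ℂ C c x) = _
    rw [ContinuousLinearMap.mul_apply', ContinuousLinearMap.mul_apply', DC_fst_mul]
  · ext x
    show (m * (c : 𝓜(ℂ, C))).snd x = ((m.fst c : C) : 𝓜(ℂ, C)).snd x
    rw [DoubleCentralizer.mul_snd, DoubleCentralizer.coe_snd, DoubleCentralizer.coe_snd]
    show (ContinuousLinearMap.mul ℂ C).flip c (m.snd x) = _
    rw [ContinuousLinearMap.flip_apply, ContinuousLinearMap.flip_apply,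
      ContinuousLinearMap.mul_apply', ContinuousLinearMap.mul_apply', m.central]

lemma DC_coe_mul (b : C) (m : 𝓜(ℂ, C)) :
    (b : 𝓜(ℂ, C)) * m = ((m.snd b : C) : 𝓜(ℂ, C)) := by
  refine DoubleCentralizer.ext _ _ _ _ (Prod.ext ?_ ?_)
  · ext x
    show ((b : 𝓜(ℂ, C)) * m).fst x = ((m.snd b : C) : 𝓜(ℂ, C)).fst x
    rw [DoubleCentralizer.mul_fst, DoubleCentralizer.coe_fst, DoubleCentralizer.coe_fst]
    show ContinuousLinearMap.mul ℂ C b (m.fst x) = _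
    rw [ContinuousLinearMap.mul_apply', ContinuousLinearMap.mul_apply', m.central]
  · ext x
    show ((b : 𝓜(ℂ, C)) * m).snd x = ((m.snd b : C) : 𝓜(ℂ, C)).snd x
    rw [DoubleCentralizer.mul_snd, DoubleCentralizer.coe_snd, DoubleCentralizer.coe_snd]
    show m.snd ((ContinuousLinearMap.mul ℂ C).flip b x) = _
    rw [ContinuousLinearMap.flip_apply, ContinuousLinearMap.flip_apply,
      ContinuousLinearMap.mul_apply', ContinuousLinearMap.mul_apply', DC_snd_mul]

lemma DC_coe_injective : Function.Injective ((↑) : C → 𝓜(ℂ, C)) := by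
  intro a b h
  rw [← sub_eq_zero]
  refine aux_eq_zero_left fun z => ?_
  have := congrArg (fun m : 𝓜(ℂ, C) => m.fst z) h
  simp only [DoubleCentralizer.coe_fst, ContinuousLinearMap.mul_apply'] at this
  rw [sub_mul, this, sub_self]

lemma DC_coe_mul_coe (b c : C) (m : 𝓜(ℂ, C)) :
    (b : 𝓜(ℂ, C)) * m * (c : 𝓜(ℂ, C)) = ((b * m.fst c : C) : 𝓜(ℂ, C)) := by
  rw [mul_assoc, DC_mul_coe, DC_coe_mul]
  congr 1

lemma subset_genClosedIdeal {s : Set C} : s ⊆ (genClosedIdeal s : Set C) := fun _ hx =>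
  (TwoSidedIdeal.mem_sInf C).mpr fun _ hJ => hJ.2 hx

lemma genClosedIdeal_le {s : Set C} {J : TwoSidedIdeal C} (h1 : IsClosed (J : Set C))
    (h2 : s ⊆ J) : genClosedIdeal s ≤ J := sInf_le ⟨h1, h2⟩

lemma isClosed_genClosedIdeal (s : Set C) : IsClosed ((genClosedIdeal s : Set C)) := by
  have : (genClosedIdeal s : Set C) =
      ⋂ J ∈ {J : TwoSidedIdeal C | IsClosed (J : Set C) ∧ s ⊆ J}, (J : Set C) := by
    ext x
    simp only [Set.mem_iInter, SetLike.mem_coe, Set.mem_setOf_eq]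
    exact (TwoSidedIdeal.mem_sInf C).trans (by simp)
  rw [this]
  exact isClosed_biInter fun J hJ => hJ.1

lemma genClosedIdeal_carrier {s : Set C}
    (hl : ∀ (r : C), ∀ x ∈ s, r * x ∈ s) (hr : ∀ (r : C), ∀ x ∈ s, x * r ∈ s) :
    (genClosedIdeal s : Set C) = closure ((AddSubgroup.closure s : AddSubgroup C) : Set C) := by
  have hml : ∀ (r : C), ∀ x ∈ AddSubgroup.closure s, r * x ∈ AddSubgroup.closure s := by
    intro r x hx
    induction hx using AddSubgroup.closure_induction with
    | mem y hy => exact AddSubgroup.subset_closure (hl r y hy)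
    | zero => simpa using AddSubgroup.zero_mem _
    | add y z _ _ hy hz => rw [mul_add]; exact AddSubgroup.add_mem _ hy hz
    | neg y _ hy => rw [mul_neg]; exact AddSubgroup.neg_mem _ hy
  have hmr : ∀ (r : C), ∀ x ∈ AddSubgroup.closure s, x * r ∈ AddSubgroup.closure s := by
    intro r x hx
    induction hx using AddSubgroup.closure_induction with
    | mem y hy => exact AddSubgroup.subset_closure (hr r y hy)
    | zero => simpa using AddSubgroup.zero_mem _
    | add y z _ _ hy hz => rw [add_mul]; exact AddSubgroup.add_mem _ hy hz
    | neg y _ hy => rw [neg_mul]; exact AddSubgroup.neg_mem _ hy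
  set T := (AddSubgroup.closure s).topologicalClosure with hT
  have hTc : (T : Set C) = closure ((AddSubgroup.closure s : AddSubgroup C) : Set C) := rfl
  set K : TwoSidedIdeal C := TwoSidedIdeal.mk' (T : Set C)
    T.zero_mem (fun ha hb => T.add_mem ha hb) (fun ha => T.neg_mem ha)
    (fun {x y} hy => by
      have : Set.MapsTo (fun z => x * z) ((AddSubgroup.closure s : AddSubgroup C) : Set C)
          ((AddSubgroup.closure s : AddSubgroup C) : Set C) := fun z hz => hml x z hz
      exact this.closure (continuous_const.mul continuous_id) hy)
    (fun {x y} hx => by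
      have : Set.MapsTo (fun z => z * y) ((AddSubgroup.closure s : AddSubgroup C) : Set C)
          ((AddSubgroup.closure s : AddSubgroup C) : Set C) := fun z hz => hmr y z hz
      exact this.closure (continuous_id.mul continuous_const) hx) with hK
  have hKcoe : (K : Set C) = closure ((AddSubgroup.closure s : AddSubgroup C) : Set C) :=
    TwoSidedIdeal.coe_mk' _ _ _ _ _ _
  refine Set.Subset.antisymm ?_ ?_
  · rw [← hKcoe]
    refine genClosedIdeal_le (by rw [hKcoe]; exact isClosed_closure) ?_
    intro x hx
    rw [hKcoe]
    exact subset_closure (AddSubgroup.subset_closure hx)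
  · refine closure_minimal ?_ (isClosed_genClosedIdeal s)
    intro x hx
    induction hx using AddSubgroup.closure_induction with
    | mem y hy => exact subset_genClosedIdeal hy
    | zero => simpa using TwoSidedIdeal.zero_mem _
    | add y z _ _ hy hz => exact TwoSidedIdeal.add_mem _ hy hz
    | neg y _ hy => exact TwoSidedIdeal.neg_mem _ hy

end Aux

section Part

lemma sum_mul_prod_one_sub (f : ℕ → ℝ) (n : ℕ) :
    ∑ i ∈ Finset.range n, f i * ∏ j ∈ Finset.range i, (1 - f j) =
      1 - ∏ i ∈ Finset.range n, (1 - f i) := by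
  induction n with
  | zero => simp
  | succ n ih => rw [Finset.sum_range_succ, Finset.prod_range_succ, ih]; ring

lemma exists_partition {X : Type*} [TopologicalSpace X] [RegularSpace X] [LocallyCompactSpace X]
    {n : ℕ} (U : Fin n → Set X) (hU : ∀ i, IsOpen (U i)) {K : Set X} (hK : IsCompact K)
    (hcover : K ⊆ ⋃ i, U i) :
    ∃ φ : Fin n → C(X, ℝ), (∀ i, HasCompactSupport (φ i)) ∧ (∀ i x, 0 ≤ φ i x) ∧
      (∀ i x, x ∉ U i → φ i x = 0) ∧ (∀ x, ∑ i, φ i x ≤ 1) ∧ ∀ x ∈ K, ∑ i, φ i x = 1 := by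
  classical
  obtain ⟨M, hMc, hMU, hKM⟩ := hK.finite_compact_cover Finset.univ U (fun i _ => hU i)
    (by simpa using hcover)
  have hf : ∀ i : Fin n, ∃ f : C(X, ℝ), Set.EqOn f 1 (M i) ∧ Set.EqOn f 0 (U i)ᶜ ∧
      HasCompactSupport f ∧ ∀ x, f x ∈ Set.Icc (0 : ℝ) 1 := fun i =>
    exists_continuous_one_zero_of_isCompact (hMc i) (hU i).isClosed_compl
      (Set.disjoint_compl_right_iff_subset.mpr (hMU i))
  choose f hf1 hf0 hfc hf01 using hf
  set F : ℕ → C(X, ℝ) := fun k => if h : k < n then f ⟨k, h⟩ else 0 with hF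
  have hF0 : ∀ k x, 0 ≤ F k x := by
    intro k x; rw [hF]; dsimp only
    split
    · exact (hf01 _ x).1
    · simp
  have hF1 : ∀ k x, F k x ≤ 1 := by
    intro k x; rw [hF]; dsimp only
    split
    · exact (hf01 _ x).2
    · simp
  set φ' : ℕ → C(X, ℝ) := fun k => F k * ∏ j ∈ Finset.range k, (1 - F j) with hφ'
  have hφ'app : ∀ k x, φ' k x = F k x * ∏ j ∈ Finset.range k, (1 - F j x) := by
    intro k x
    rw [hφ']; dsimp only
    rw [ContinuousMap.mul_apply, ContinuousMap.prod_apply]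
    simp
  have hsum : ∀ x, ∑ i : Fin n, φ' i x = 1 - ∏ i ∈ Finset.range n, (1 - F i x) := by
    intro x
    rw [Fin.sum_univ_eq_sum_range (fun k => φ' k x) n]
    rw [← sum_mul_prod_one_sub (fun k => F k x) n]
    exact Finset.sum_congr rfl fun k _ => hφ'app k x
  refine ⟨fun i => φ' i, ?_, ?_, ?_, ?_, ?_⟩
  · intro i
    show HasCompactSupport ⇑(φ' (i : ℕ))
    have h3 : ⇑(φ' (i : ℕ)) = ⇑(F (i : ℕ)) * ⇑(∏ j ∈ Finset.range (i : ℕ), (1 - F j)) :=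
      ContinuousMap.coe_mul _ _
    rw [h3]
    apply HasCompactSupport.mul_right
    have h1 : F (i : ℕ) = f i := by rw [hF]; dsimp only; rw [dif_pos i.isLt]
    rw [h1]
    exact hfc i
  · intro i x
    rw [hφ'app]
    exact mul_nonneg (hF0 _ _) (Finset.prod_nonneg fun j _ => by linarith [hF1 j x])
  · intro i x hx
    rw [hφ'app]
    have : F i x = 0 := by
      have h1 : F (i : ℕ) = f i := by rw [hF]; dsimp only; rw [dif_pos i.isLt]
      rw [h1]
      exact hf0 i hx
    rw [this, zero_mul]
  · intro x
    rw [hsum]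
    have : (0:ℝ) ≤ ∏ i ∈ Finset.range n, (1 - F i x) :=
      Finset.prod_nonneg fun j _ => by linarith [hF1 j x]
    linarith
  · intro x hx
    rw [hsum]
    rw [hKM] at hx
    simp only [Finset.mem_univ, Set.iUnion_true, Set.mem_iUnion] at hx
    obtain ⟨i, hi⟩ := hx
    have hFi : F i x = 1 := by
      have h1 : F (i : ℕ) = f i := by rw [hF]; dsimp only; rw [dif_pos i.isLt]
      rw [h1]
      exact hf1 i hi
    have : ∏ i ∈ Finset.range n, (1 - F i x) = 0 :=
      Finset.prod_eq_zero (Finset.mem_range.mpr i.isLt) (by rw [hFi]; ring)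
    rw [this]; ring

end Part

section C0Aux

variable {G : Type*} [TopologicalSpace G] {B : Type*} [NonUnitalCStarAlgebra B]

lemma c0_norm_le (w : C₀(G, B)) {c : ℝ} (hc : 0 ≤ c) (h : ∀ g, ‖w g‖ ≤ c) : ‖w‖ ≤ c := by
  rw [← ZeroAtInftyContinuousMap.norm_toBCF_eq_norm]
  exact (BoundedContinuousFunction.norm_le hc).mpr h

lemma c0_norm_apply_le (w : C₀(G, B)) (g : G) : ‖w g‖ ≤ ‖w‖ := by
  rw [← ZeroAtInftyContinuousMap.norm_toBCF_eq_norm]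
  exact BoundedContinuousFunction.norm_coe_le_norm w.toBCF g

/-- Evaluation as an additive monoid hom. -/
def c0_ev (B : Type*) [NonUnitalCStarAlgebra B] (g : G) : C₀(G, B) →+ B where
  toFun w := w g
  map_zero' := rfl
  map_add' _ _ := rfl

lemma c0_ev_continuous (g : G) : Continuous (c0_ev B g) :=
  AddMonoidHomClass.continuous_of_bound (c0_ev B g) 1 fun w => by
    rw [one_mul]; exact c0_norm_apply_le w g

/-- Bundling a compactly supported continuous function as an element of `C₀`. -/
noncomputable def c0_of_cpt (f : G → B) (hf : Continuous f) (K : Set G) (hK : IsCompact K)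
    (h0 : ∀ g ∉ K, f g = 0) : C₀(G, B) :=
  ⟨⟨f, hf⟩, by
    have hev : f =ᶠ[Filter.cocompact G] 0 := by
      refine Filter.mem_of_superset (Filter.mem_cocompact.mpr ⟨K, hK, subset_rfl⟩) ?_
      intro g hg
      exact h0 g hg
    exact Filter.Tendsto.congr' hev.symm tendsto_const_nhds⟩

@[simp] lemma c0_of_cpt_apply (f : G → B) (hf) (K) (hK) (h0) (g : G) :
    c0_of_cpt f hf K hK h0 g = f g := rfl

end C0Aux

variable {B : Type*} [NonUnitalCStarAlgebra B]

/-- For `ψ : A → M(B)` and a set `s ⊆ A`, the closed two-sided ideal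
`closure(B ψ(s) B)` of `B`. -/
def mulIdealGen {A : Type*} [NonUnitalCStarAlgebra A]
    (ψ : A →⋆ₙₐ[ℂ] 𝓜(ℂ, B)) (s : Set A) : TwoSidedIdeal B :=
  genClosedIdeal {x : B | ∃ a ∈ s, ∃ b c : B, x = b * (ψ a).fst c}

/-- For a `*`-homomorphism `ψ : A → M(B)` inducing an equivariant map on ideal lattices, the
map `ψ̂ : A → C_b^s(G, M(B)) = M(C₀(G,B))`, `ψ̂(a)(g) = β_g(ψ(α_{g⁻¹}(a)))`, is
`α`-to-`β̄`-equivariant, and the closed ideal of `C₀(G,B)` generated by `ψ̂(I)` is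
`C₀(G, closure(Bψ(I)B))`. -/
theorem psihat_equivariant_and_ideal
    {G : Type*} [Group G] [TopologicalSpace G] [IsTopologicalGroup G]
    [LocallyCompactSpace G] [SecondCountableTopology G]
    {A : Type*} [NonUnitalCStarAlgebra A]
    [TopologicalSpace.SeparableSpace A] [TopologicalSpace.SeparableSpace B]
    (α : G → A ≃⋆ₐ[ℂ] A) (β : G → B ≃⋆ₐ[ℂ] B)
    (hα1 : α 1 = StarAlgEquiv.refl ℂ A) (hαmul : ∀ g h a, α (g * h) a = α g (α h a))
    (hβ1 : β 1 = StarAlgEquiv.refl ℂ B) (hβmul : ∀ g h b, β (g * h) b = β g (β h b))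
    (hαcont : ∀ a : A, Continuous fun g => α g a)
    (hβcont : ∀ b : B, Continuous fun g => β g b)
    -- the canonical (strictly continuous) extension of `β` to the multiplier algebra
    (βM : G → 𝓜(ℂ, B) ≃⋆ₐ[ℂ] 𝓜(ℂ, B))
    (hβM1 : βM 1 = StarAlgEquiv.refl ℂ 𝓜(ℂ, B))
    (hβMmul : ∀ g h m, βM (g * h) m = βM g (βM h m))
    (hβMβ : ∀ (g : G) (b : B), βM g (b : 𝓜(ℂ, B)) = ((β g b : B) : 𝓜(ℂ, B)))
    (ψ : A →⋆ₙₐ[ℂ] 𝓜(ℂ, B))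
    -- the map `I ↦ closure(Bψ(I)B)` is `α♯`-to-`β♯` equivariant
    (hequiv : ∀ (g : G) (I : TwoSidedIdeal A), IsClosed (I : Set A) →
      mulIdealGen ψ ((α g) '' (I : Set A)) =
        genClosedIdeal ((β g) '' (mulIdealGen ψ (I : Set A) : Set B)))
    -- `ψ̂(a)(g) = β_g(ψ(α_{g⁻¹}(a)))`
    (ψhat : A → G → 𝓜(ℂ, B))
    (hψhat : ∀ a g, ψhat a g = βM g (ψ (α g⁻¹ a))) :
    -- (1) `ψ̂` is `α`-to-`β̄`-equivariant: `β̄_g(ψ̂(a)) = ψ̂(α_g(a))`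
    (∀ (a : A) (g h : G), ψhat (α g a) h = βM g (ψhat a (g⁻¹ * h))) ∧
    -- (2) the closed ideal of `C₀(G,B)` generated by `ψ̂(I)` equals `C₀(G, closure(Bψ(I)B))`
    (∀ I : TwoSidedIdeal A, IsClosed (I : Set A) →
      ((genClosedIdeal {w : C₀(G, B) | ∃ a ∈ I, ∃ u v : C₀(G, B),
          ⇑w = fun g => u g * ((ψhat a g).fst (v g))} : TwoSidedIdeal C₀(G, B)) :
        Set C₀(G, B)) =
      {w : C₀(G, B) | ∀ g : G, w g ∈ mulIdealGen ψ (I : Set A)}) := by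

  have hβinv : ∀ (g : G) (b : B), β g (β g⁻¹ b) = b := fun g b => by
    rw [← hβmul, mul_inv_cancel, hβ1]; rfl
  have hβinv' : ∀ (g : G) (b : B), β g⁻¹ (β g b) = b := fun g b => by
    rw [← hβmul, inv_mul_cancel, hβ1]; rfl
  constructor
  · intro a g h
    rw [hψhat, hψhat, ← hβMmul, mul_inv_cancel_left]
    congr 2
    rw [mul_inv_rev, inv_inv, hαmul]
  intro I hI
  set J : TwoSidedIdeal B := mulIdealGen ψ (I : Set A) with hJdef
  have hJclosed : IsClosed (J : Set B) := isClosed_genClosedIdeal _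
  -- multiplier conjugation identities
  have hconj : ∀ (g : G) (m : 𝓜(ℂ, B)) (b c : B),
      β g b * (βM g m).fst (β g c) = β g (b * m.fst c) := by
    intro g m b c
    apply DC_coe_injective
    rw [← DC_coe_mul_coe, ← hβMβ, ← hβMβ, ← map_mul, ← map_mul, DC_coe_mul_coe, hβMβ]
  have hconj₁ : ∀ (g : G) (m : 𝓜(ℂ, B)) (c : B),
      (βM g m).fst c = β g (m.fst (β g⁻¹ c)) := by
    intro g m c
    apply DC_coe_injective
    rw [← DC_mul_coe, ← hβMβ]
    conv_lhs => rw [← hβinv g c]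
    rw [← hβMβ, ← map_mul, DC_mul_coe]
  -- continuity lemmas
  have hisom : ∀ g : G, Isometry (β g) := fun g => StarAlgEquiv.isometry (β g)
  have hβinvcont : ∀ b : B, Continuous fun g : G => β g⁻¹ b := fun b =>
    (hβcont b).comp continuous_inv
  have hβjoint : ∀ {F : G → B}, Continuous F → Continuous fun g => β g (F g) := by
    intro F hF
    rw [continuous_iff_continuousAt]
    intro g₀
    rw [ContinuousAt, tendsto_iff_norm_sub_tendsto_zero]
    have t1 : Filter.Tendsto (fun g => ‖F g - F g₀‖) (nhds g₀) (nhds 0) := by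
      have := tendsto_sub_nhds_zero_iff.mpr (hF.tendsto g₀)
      simpa using this.norm
    have t2 : Filter.Tendsto (fun g => ‖β g (F g₀) - β g₀ (F g₀)‖) (nhds g₀) (nhds 0) := by
      have := tendsto_sub_nhds_zero_iff.mpr ((hβcont (F g₀)).tendsto g₀)
      simpa using this.norm
    refine squeeze_zero (fun g => norm_nonneg _) (fun g => ?_) (by simpa using t1.add t2)
    have h1 : β g (F g) - β g₀ (F g₀) = (β g (F g) - β g (F g₀)) + (β g (F g₀) - β g₀ (F g₀)) := by
      abel
    rw [h1]
    refine le_trans (norm_add_le _ _) ?_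
    have h2 : ‖β g (F g) - β g (F g₀)‖ = ‖F g - F g₀‖ := by
      rw [← map_sub, StarAlgEquiv.norm_map]
    rw [h2]
  have hψc : Continuous (ψ : A → 𝓜(ℂ, B)) :=
    AddMonoidHomClass.continuous_of_bound ψ 1 fun x => by
      rw [one_mul]; exact NonUnitalStarAlgHom.norm_apply_le ψ x
  have hfstcont : Continuous fun m : 𝓜(ℂ, B) => m.fst := by
    have : ∀ m : 𝓜(ℂ, B), ‖(DoubleCentralizer.toProdHom m).1‖ ≤ 1 * ‖m‖ := fun m => by
      rw [one_mul]
      exact (DoubleCentralizer.norm_fst m).le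
    exact continuous_fst.comp
      (AddMonoidHomClass.continuous_of_bound DoubleCentralizer.toProdHom 1 fun m => by
        rw [one_mul, ← DoubleCentralizer.norm_def])
  have happly : ∀ {M : G → 𝓜(ℂ, B)} {x : G → B}, Continuous M → Continuous x →
      Continuous fun g => (M g).fst (x g) := by
    intro M x hM hx
    exact isBoundedBilinearMap_apply.continuous.comp ((hfstcont.comp hM).prodMk hx)
  have hq_cont : ∀ (a : A) (c : B), Continuous fun g : G => (ψhat a g).fst c := by
    intro a c
    have heq : (fun g : G => (ψhat a g).fst c) =
        fun g => β g ((ψ (α g⁻¹ a)).fst (β g⁻¹ c)) := by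
      funext g
      rw [hψhat, hconj₁]
    rw [heq]
    exact hβjoint (happly (hψc.comp ((hαcont a).comp continuous_inv)) (hβinvcont c))
  -- preimage description of images under β g
  have hpre : ∀ (g : G) (s : Set B), β g '' s = β g⁻¹ ⁻¹' s := by
    intro g s
    ext x
    constructor
    · rintro ⟨y, hy, rfl⟩
      rw [Set.mem_preimage, hβinv']
      exact hy
    · intro hx
      exact ⟨β g⁻¹ x, hx, hβinv g x⟩
  have himg_closure : ∀ (g : G) (s : Set B), β g '' closure s = closure (β g '' s) := by
    intro g s
    refine Set.Subset.antisymm (image_closure_subset_closure_image (hisom g).continuous) ?_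
    refine closure_minimal (Set.image_mono subset_closure) ?_
    rw [hpre]
    exact isClosed_closure.preimage (hisom g⁻¹).continuous
  -- the image of a closed ideal under β g generates itself
  have hKimg : ∀ (g : G) (K : TwoSidedIdeal B), IsClosed (K : Set B) →
      ((genClosedIdeal (β g '' (K : Set B)) : TwoSidedIdeal B) : Set B) =
        β g '' (K : Set B) := by
    intro g K hK
    have hcl : IsClosed (β g '' (K : Set B)) := by
      rw [hpre]
      exact hK.preimage (hisom g⁻¹).continuous
    set K' : TwoSidedIdeal B := TwoSidedIdeal.mk' (β g '' (K : Set B))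
      ⟨0, K.zero_mem, map_zero _⟩
      (by
        rintro x y ⟨x', hx', rfl⟩ ⟨y', hy', rfl⟩
        exact ⟨x' + y', K.add_mem hx' hy', map_add _ _ _⟩)
      (by
        rintro x ⟨x', hx', rfl⟩
        exact ⟨-x', K.neg_mem hx', map_neg _ _⟩)
      (by
        rintro x y ⟨y', hy', rfl⟩
        exact ⟨β g⁻¹ x * y', K.mul_mem_left _ _ hy', by rw [map_mul, hβinv]⟩)
      (by
        rintro x y ⟨x', hx', rfl⟩
        exact ⟨x' * β g⁻¹ y, K.mul_mem_right _ _ hx', by rw [map_mul, hβinv]⟩) with hK'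
    have hK'coe : (K' : Set B) = β g '' (K : Set B) := TwoSidedIdeal.coe_mk' _ _ _ _ _ _
    refine Set.Subset.antisymm ?_ ?_
    · rw [← hK'coe]
      refine genClosedIdeal_le (by rw [hK'coe]; exact hcl) ?_
      rw [hK'coe]
    · exact subset_genClosedIdeal
  -- carrier of mulIdealGen
  have hmul_carrier : ∀ s : Set A, ((mulIdealGen ψ s : TwoSidedIdeal B) : Set B) =
      closure ((AddSubgroup.closure {x : B | ∃ a ∈ s, ∃ b c : B, x = b * (ψ a).fst c} :
        AddSubgroup B) : Set B) := by
    intro s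
    refine genClosedIdeal_carrier ?_ ?_
    · rintro r x ⟨a, ha, b, c, rfl⟩
      exact ⟨a, ha, r * b, c, (mul_assoc r b _).symm⟩
    · rintro r x ⟨a, ha, b, c, rfl⟩
      exact ⟨a, ha, b, c * r, by rw [DC_fst_mul, mul_assoc]⟩
  -- the fibers of the generated ideal are all equal to J
  have hfiber : ∀ g : G, (J : Set B) =
      closure ((AddSubgroup.closure {x : B | ∃ a ∈ I, ∃ b c : B, x = b * (ψhat a g).fst c} :
        AddSubgroup B) : Set B) := by
    intro g
    have hset : {x : B | ∃ a ∈ I, ∃ b c : B, x = b * (ψhat a g).fst c} =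
        β g '' {x : B | ∃ a ∈ (α g⁻¹ '' (I : Set A)), ∃ b c : B, x = b * (ψ a).fst c} := by
      ext x
      constructor
      · rintro ⟨a, ha, b, c, rfl⟩
        refine ⟨β g⁻¹ b * (ψ (α g⁻¹ a)).fst (β g⁻¹ c), ⟨α g⁻¹ a, ⟨a, ha, rfl⟩, _, _, rfl⟩, ?_⟩
        have := hconj g (ψ (α g⁻¹ a)) (β g⁻¹ b) (β g⁻¹ c)
        rw [hβinv, hβinv, ← hψhat] at this
        exact this.symm ▸ rfl
      · rintro ⟨y, ⟨a', ⟨a, ha, rfl⟩, b, c, rfl⟩, rfl⟩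
        refine ⟨a, ha, β g b, β g c, ?_⟩
        rw [hψhat]
        exact (hconj g _ b c).symm
    rw [hset]
    -- push the additive closure through `β g`
    have h2 : ((AddSubgroup.closure (β g ''
          {x : B | ∃ a ∈ (α g⁻¹ '' (I : Set A)), ∃ b c : B, x = b * (ψ a).fst c}) :
        AddSubgroup B) : Set B) =
        β g '' ((AddSubgroup.closure
          {x : B | ∃ a ∈ (α g⁻¹ '' (I : Set A)), ∃ b c : B, x = b * (ψ a).fst c} :
          AddSubgroup B) : Set B) := by
      have hmc := AddMonoidHom.map_closure (AddMonoidHom.mk' (β g) (map_add (β g)))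
        {x : B | ∃ a ∈ (α g⁻¹ '' (I : Set A)), ∃ b c : B, x = b * (ψ a).fst c}
      have : (AddSubgroup.closure (β g ''
          {x : B | ∃ a ∈ (α g⁻¹ '' (I : Set A)), ∃ b c : B, x = b * (ψ a).fst c})) =
          (AddSubgroup.closure
          {x : B | ∃ a ∈ (α g⁻¹ '' (I : Set A)), ∃ b c : B, x = b * (ψ a).fst c}).map
          (AddMonoidHom.mk' (β g) (map_add (β g))) := hmc.symm
      rw [this, AddSubgroup.coe_map]
      rfl
    rw [h2, ← himg_closure]
    have h3 : closure ((AddSubgroup.closure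
        {x : B | ∃ a ∈ (α g⁻¹ '' (I : Set A)), ∃ b c : B, x = b * (ψ a).fst c} :
        AddSubgroup B) : Set B) = ((mulIdealGen ψ (α g⁻¹ '' (I : Set A)) :
        TwoSidedIdeal B) : Set B) := (hmul_carrier _).symm
    rw [h3, hequiv g⁻¹ I hI, hKimg g⁻¹ J hJclosed]
    ext x
    constructor
    · intro hx
      exact ⟨β g⁻¹ x, ⟨x, hx, rfl⟩, hβinv g x⟩
    · rintro ⟨y, ⟨z, hz, rfl⟩, rfl⟩
      rwa [hβinv]
  
  -- the generating set in `C₀(G,B)`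
  set Sgen : Set C₀(G, B) := {w : C₀(G, B) | ∃ a ∈ I, ∃ u v : C₀(G, B),
      ⇑w = fun g => u g * ((ψhat a g).fst (v g))} with hSgen
  have hSgenJ : ∀ w ∈ Sgen, ∀ g : G, w g ∈ J := by
    rintro w ⟨a, ha, u, v, hwc⟩ g
    have h1 : w g = u g * (ψhat a g).fst (v g) := congrFun hwc g
    have hx : u g * (ψhat a g).fst (v g) ∈ (J : Set B) := by
      rw [hfiber g]
      exact subset_closure (AddSubgroup.subset_closure ⟨a, ha, u g, v g, rfl⟩)
    rw [h1]
    exact hx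
  have hKscl : IsClosed {w : C₀(G, B) | ∀ g : G, w g ∈ J} := by
    have h1 : {w : C₀(G, B) | ∀ g : G, w g ∈ J} =
        ⋂ g : G, (fun w : C₀(G, B) => w g) ⁻¹' (J : Set B) := by
      ext w
      simp only [Set.mem_iInter, Set.mem_setOf_eq, Set.mem_preimage, SetLike.mem_coe]
    rw [h1]
    exact isClosed_iInter fun g => hJclosed.preimage (c0_ev_continuous g)
  refine Set.Subset.antisymm ?_ ?_
  · -- the generated ideal is contained in the RHS
    set Kid : TwoSidedIdeal C₀(G, B) := TwoSidedIdeal.mk' {w : C₀(G, B) | ∀ g : G, w g ∈ J}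
      (fun g => by
        rw [ZeroAtInftyContinuousMap.zero_apply]
        exact J.zero_mem)
      (fun {x y} hx hy g => by
        rw [ZeroAtInftyContinuousMap.add_apply]
        exact J.add_mem (hx g) (hy g))
      (fun {x} hx g => by
        rw [ZeroAtInftyContinuousMap.neg_apply]
        exact J.neg_mem (hx g))
      (fun {x y} hy g => by
        rw [ZeroAtInftyContinuousMap.mul_apply]
        exact J.mul_mem_left _ _ (hy g))
      (fun {x y} hx g => by
        rw [ZeroAtInftyContinuousMap.mul_apply]
        exact J.mul_mem_right _ _ (hx g)) with hKid
    have hle := genClosedIdeal_le (J := Kid)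
      (by rw [hKid, TwoSidedIdeal.coe_mk']; exact hKscl)
      (fun w hw => by
        rw [SetLike.mem_coe, hKid, TwoSidedIdeal.mem_mk']
        exact hSgenJ w hw)
    intro w hw
    have h2 := hle hw
    rw [hKid, TwoSidedIdeal.mem_mk'] at h2
    exact h2
  · -- the RHS is contained in the generated ideal
    intro w hw
    have hw : ∀ g : G, w g ∈ J := hw
    have hDclosed : IsClosed ((genClosedIdeal Sgen : TwoSidedIdeal C₀(G, B)) : Set C₀(G, B)) :=
      isClosed_genClosedIdeal _
    rw [← hDclosed.closure_eq, Metric.mem_closure_iff]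
    intro ε hε
    -- global sections over the fibers
    have hglobal : ∀ g₀ : G, ∀ t ∈ AddSubgroup.closure
        {x : B | ∃ a ∈ I, ∃ b c : B, x = b * (ψhat a g₀).fst c},
        ∃ q : G → B, Continuous q ∧ q g₀ = t ∧
          ∀ φ : C(G, ℝ), HasCompactSupport ⇑φ → (∀ x, 0 ≤ φ x) →
            ∃ d : C₀(G, B), d ∈ genClosedIdeal Sgen ∧
              ⇑d = fun g => ((φ g : ℝ) : ℂ) • q g := by
      intro g₀ t ht
      induction ht using AddSubgroup.closure_induction with
      | mem x hx =>
        obtain ⟨a, ha, b, c, rfl⟩ := hx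
        refine ⟨fun g => b * (ψhat a g).fst c, continuous_const.mul (hq_cont a c), rfl, ?_⟩
        intro φ hφc hφ0
        set u : C₀(G, B) := c0_of_cpt (fun g => ((Real.sqrt (φ g) : ℝ) : ℂ) • b)
          ((Complex.continuous_ofReal.comp (Real.continuous_sqrt.comp (map_continuous φ))).smul
            continuous_const) (tsupport ⇑φ) hφc (fun g hg => by
              simp [image_eq_zero_of_notMem_tsupport hg]) with hu
        set v : C₀(G, B) := c0_of_cpt (fun g => ((Real.sqrt (φ g) : ℝ) : ℂ) • c)
          ((Complex.continuous_ofReal.comp (Real.continuous_sqrt.comp (map_continuous φ))).smul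
            continuous_const) (tsupport ⇑φ) hφc (fun g hg => by
              simp [image_eq_zero_of_notMem_tsupport hg]) with hv
        set d : C₀(G, B) := c0_of_cpt (fun g => ((φ g : ℝ) : ℂ) • (b * (ψhat a g).fst c))
          ((Complex.continuous_ofReal.comp (map_continuous φ)).smul
            (continuous_const.mul (hq_cont a c)))
          (tsupport ⇑φ) hφc (fun g hg => by
            simp [image_eq_zero_of_notMem_tsupport hg]) with hd
        have hdc : ⇑d = fun g => u g * (ψhat a g).fst (v g) := by
          funext g
          show ((φ g : ℝ) : ℂ) • (b * (ψhat a g).fst c) =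
            (((Real.sqrt (φ g) : ℝ) : ℂ) • b) *
              (ψhat a g).fst (((Real.sqrt (φ g) : ℝ) : ℂ) • c)
          rw [ContinuousLinearMap.map_smul, smul_mul_smul_comm,
            ← Complex.ofReal_mul, Real.mul_self_sqrt (hφ0 g)]
        exact ⟨d, subset_genClosedIdeal ⟨a, ha, u, v, hdc⟩, rfl⟩
      | zero =>
        refine ⟨fun _ => 0, continuous_const, rfl, fun φ hφc hφ0 => ⟨0, ?_, ?_⟩⟩
        · exact SetLike.mem_coe.mpr (genClosedIdeal Sgen).zero_mem
        · funext g
          rw [ZeroAtInftyContinuousMap.zero_apply, smul_zero]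
      | add x y hx hy ihx ihy =>
        obtain ⟨q1, hq1c, hq1g, hq1φ⟩ := ihx
        obtain ⟨q2, hq2c, hq2g, hq2φ⟩ := ihy
        refine ⟨fun g => q1 g + q2 g, hq1c.add hq2c, by simp only [hq1g, hq2g], ?_⟩
        intro φ hφc hφ0
        obtain ⟨d1, hd1, hd1c⟩ := hq1φ φ hφc hφ0
        obtain ⟨d2, hd2, hd2c⟩ := hq2φ φ hφc hφ0
        refine ⟨d1 + d2, SetLike.mem_coe.mpr
          ((genClosedIdeal Sgen).add_mem (SetLike.mem_coe.mp hd1) (SetLike.mem_coe.mp hd2)), ?_⟩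
        funext g
        rw [ZeroAtInftyContinuousMap.add_apply, congrFun hd1c g, congrFun hd2c g, smul_add]
      | neg x hx ihx =>
        obtain ⟨q1, hq1c, hq1g, hq1φ⟩ := ihx
        refine ⟨fun g => -(q1 g), hq1c.neg, by simp only [hq1g], ?_⟩
        intro φ hφc hφ0
        obtain ⟨d1, hd1, hd1c⟩ := hq1φ φ hφc hφ0
        refine ⟨-d1, SetLike.mem_coe.mpr
          ((genClosedIdeal Sgen).neg_mem (SetLike.mem_coe.mp hd1)), ?_⟩
        funext g
        rw [ZeroAtInftyContinuousMap.neg_apply, congrFun hd1c g, smul_neg]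
    -- compact set outside which `w` is small
    obtain ⟨Kc, hKcc, hKcsmall⟩ : ∃ Kc : Set G, IsCompact Kc ∧ ∀ g ∉ Kc, ‖w g‖ < ε / 4 := by
      have hz : Filter.Tendsto ⇑w (Filter.cocompact G) (nhds 0) := zero_at_infty w
      have hmem : {b : B | ‖b‖ < ε / 4} ∈ nhds (0 : B) := by
        have hb : Metric.ball (0 : B) (ε / 4) = {b : B | ‖b‖ < ε / 4} := by
          ext b
          simp [Metric.mem_ball, dist_zero_right]
        rw [← hb]
        exact Metric.ball_mem_nhds _ (by linarith)
      have hpre2 : ⇑w ⁻¹' {b : B | ‖b‖ < ε / 4} ∈ Filter.cocompact G := hz hmem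
      rw [Filter.mem_cocompact] at hpre2
      obtain ⟨t, htc, hts⟩ := hpre2
      exact ⟨t, htc, fun g hg => hts hg⟩
    -- pointwise approximants
    have hpoint : ∀ g₀ : G, ∃ q : G → B, Continuous q ∧ ‖w g₀ - q g₀‖ < ε / 4 ∧
        ∀ φ : C(G, ℝ), HasCompactSupport ⇑φ → (∀ x, 0 ≤ φ x) →
          ∃ d : C₀(G, B), d ∈ genClosedIdeal Sgen ∧
            ⇑d = fun g => ((φ g : ℝ) : ℂ) • q g := by
      intro g₀
      have hwg : w g₀ ∈ (J : Set B) := hw g₀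
      rw [hfiber g₀, Metric.mem_closure_iff] at hwg
      obtain ⟨t, ht, hdist⟩ := hwg (ε / 4) (by linarith)
      obtain ⟨q, hqc, hqg, hqφ⟩ := hglobal g₀ t ht
      refine ⟨q, hqc, ?_, hqφ⟩
      rw [hqg, ← dist_eq_norm]
      exact hdist
    choose q hqcont hqnear hqφ using hpoint
    have hUopen : ∀ g₀ : G, IsOpen {g : G | ‖w g - q g₀ g‖ < ε / 2} := fun g₀ =>
      isOpen_lt (Continuous.norm ((map_continuous w).sub (hqcont g₀))) continuous_const
    obtain ⟨tf, htf⟩ := hKcc.elim_finite_subcover (fun g₀ => {g : G | ‖w g - q g₀ g‖ < ε / 2})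
      hUopen (fun g hg => Set.mem_iUnion.mpr ⟨g, lt_trans (hqnear g) (by linarith)⟩)
    set e := tf.equivFin with he
    set V : Fin tf.card → Set G := fun i => {g : G | ‖w g - q ((e.symm i : G)) g‖ < ε / 2}
      with hV
    have hVopen : ∀ i, IsOpen (V i) := fun i => hUopen _
    have hcover : Kc ⊆ ⋃ i, V i := by
      intro g hg
      obtain ⟨g₀, hg₀⟩ := Set.mem_iUnion.mp (htf hg)
      obtain ⟨hg₀t, hgU⟩ := Set.mem_iUnion.mp hg₀
      refine Set.mem_iUnion.mpr ⟨e ⟨g₀, hg₀t⟩, ?_⟩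
      rw [hV]
      simpa [Equiv.symm_apply_apply] using hgU
    obtain ⟨φp, hφcpt, hφ0, hφvan, hφle1, hφsum1⟩ := exists_partition V hVopen hKcc hcover
    have hdi : ∀ i, ∃ d : C₀(G, B), d ∈ genClosedIdeal Sgen ∧
        ⇑d = fun g => ((φp i g : ℝ) : ℂ) • q ((e.symm i : G)) g :=
      fun i => hqφ _ (φp i) (hφcpt i) (hφ0 i)
    choose d hdD hdcoe using hdi
    refine ⟨∑ i, d i, ?_, ?_⟩
    · rw [SetLike.mem_coe]
      exact sum_mem fun i _ => hdD i
    · rw [dist_eq_norm]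
      have hsumnn : ∀ g : G, (0 : ℝ) ≤ ∑ i, φp i g := fun g =>
        Finset.sum_nonneg fun i _ => hφ0 i g
      have hptwise : ∀ g : G, ‖(w - ∑ i, d i) g‖ ≤ 3 * ε / 4 := by
        intro g
        rw [ZeroAtInftyContinuousMap.sub_apply]
        have hsumapply : (∑ i, d i) g = ∑ i, ((φp i g : ℝ) : ℂ) • q ((e.symm i : G)) g := by
          have h1 : (∑ i, d i) g = ∑ i, d i g := map_sum (c0_ev B g) d Finset.univ
          rw [h1]
          exact Finset.sum_congr rfl fun i _ => congrFun (hdcoe i) g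
        rw [hsumapply]
        have hdecomp : w g - ∑ i, ((φp i g : ℝ) : ℂ) • q ((e.symm i : G)) g =
            ((1 : ℂ) - ((∑ i, φp i g : ℝ) : ℂ)) • w g +
              ∑ i, ((φp i g : ℝ) : ℂ) • (w g - q ((e.symm i : G)) g) := by
          push_cast
          rw [sub_smul, one_smul, Finset.sum_smul]
          simp only [smul_sub]
          rw [Finset.sum_sub_distrib]
          abel
        rw [hdecomp]
        refine le_trans (norm_add_le _ _) ?_
        have hterm2 : ‖∑ i, ((φp i g : ℝ) : ℂ) • (w g - q ((e.symm i : G)) g)‖ ≤ ε / 2 := by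
          refine le_trans (norm_sum_le _ _) ?_
          have hterm : ∀ i ∈ Finset.univ,
              ‖((φp i g : ℝ) : ℂ) • (w g - q ((e.symm i : G)) g)‖ ≤ φp i g * (ε / 2) := by
            intro i _
            rw [norm_smul, Complex.norm_real, Real.norm_eq_abs, abs_of_nonneg (hφ0 i g)]
            by_cases hgU : g ∈ V i
            · have hgU2 : ‖w g - q ((e.symm i : G)) g‖ < ε / 2 := by
                rw [hV] at hgU
                exact hgU
              exact mul_le_mul_of_nonneg_left (le_of_lt hgU2) (hφ0 i g)
            · rw [hφvan i g hgU]
              simp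
          refine le_trans (Finset.sum_le_sum hterm) ?_
          rw [← Finset.sum_mul]
          calc (∑ i, φp i g) * (ε / 2) ≤ 1 * (ε / 2) :=
                mul_le_mul_of_nonneg_right (hφle1 g) (by linarith)
            _ = ε / 2 := one_mul _
        have hterm1 : ‖((1 : ℂ) - ((∑ i, φp i g : ℝ) : ℂ)) • w g‖ ≤ ε / 4 := by
          rw [norm_smul]
          have h1 : (1 : ℂ) - ((∑ i, φp i g : ℝ) : ℂ) = ((1 - ∑ i, φp i g : ℝ) : ℂ) := by
            push_cast
            ring
          rw [h1, Complex.norm_real, Real.norm_eq_abs, abs_of_nonneg (by linarith [hφle1 g])]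
          by_cases hgK : g ∈ Kc
          · rw [hφsum1 g hgK]
            simp
            positivity
          · calc (1 - ∑ i, φp i g) * ‖w g‖ ≤ 1 * ‖w g‖ :=
                  mul_le_mul_of_nonneg_right (by linarith [hsumnn g]) (norm_nonneg _)
              _ = ‖w g‖ := one_mul _
              _ ≤ ε / 4 := le_of_lt (hKcsmall g hgK)
        linarith
      refine lt_of_le_of_lt (c0_norm_le _ (by positivity) hptwise) (by linarith)
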